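/- Let V be a positive definite p×p real matrix, let θ ∈ ℝᵖ have all entries positive, let δ > 0, and set c := −δ·V·θ, τ := θᵀ·c and κ := θᵀ·V·θ. Let α ∈ (0,1), let S : ℝᵖ → ℝ be Borel measurable, and let q ∈ ℝ satisfy N(0,V)({z : S(z) > q}) = α. Then Φ(z_α − τ/√κ) ≥ α and Φ(z_α − τ/√κ) ≥ N(0,V)({z : S(z + c) > q}). (Theorem 5: the smoothed-indicator test's asymptotic local power along the direction c = −δVθ is at least α and is not smaller than that of any test based on the statistic S.) -/

import Mathlib

open MeasureTheory Filter Topology ProbabilityTheory Matrix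
open scoped NNReal ENNReal Real

noncomputable section

/-- The standard normal density `φ(x) = exp(−x²/2)/√(2π)`. -/
def normalPDF (x : ℝ) : ℝ := Real.exp (-(x ^ 2) / 2) / Real.sqrt (2 * Real.pi)

/-- The standard normal CDF `Φ`. -/
def stdNormalCDF (x : ℝ) : ℝ := ∫ t in Set.Iic x, normalPDF t

/-- The positive semidefinite square root of a positive semidefinite matrix (the former
`Matrix.PosSemidef.sqrt`). -/
def posSemidefSqrt {p : ℕ} {V : Matrix (Fin p) (Fin p) ℝ} (hV : V.PosSemidef) :
    Matrix (Fin p) (Fin p) ℝ :=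
  hV.1.eigenvectorUnitary.1 * diagonal ((↑) ∘ (√·) ∘ hV.1.eigenvalues) *
    (star hV.1.eigenvectorUnitary : Matrix (Fin p) (Fin p) ℝ)

/-- The Gaussian measure `N(c, V)` on `ℝᵖ`: the pushforward of the product of `p`
standard Gaussian measures under `z ↦ c + V^{1/2}·z`, where `V^{1/2}` is the positive
semidefinite square root of `V`. -/
def gaussianPi {p : ℕ} (c : Fin p → ℝ) {V : Matrix (Fin p) (Fin p) ℝ}
    (hV : V.PosSemidef) : Measure (Fin p → ℝ) :=
  Measure.map (fun z => c + (posSemidefSqrt hV).mulVec z)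
    (Measure.pi fun _ : Fin p => gaussianReal 0 1)

lemma posSemidefSqrt_mul_self {p : ℕ} {V : Matrix (Fin p) (Fin p) ℝ} (hV : V.PosSemidef) :
    posSemidefSqrt hV * posSemidefSqrt hV = V := by
  unfold posSemidefSqrt
  have hU : (star hV.1.eigenvectorUnitary : Matrix (Fin p) (Fin p) ℝ) *
      hV.1.eigenvectorUnitary.1 = 1 := Unitary.coe_star_mul_self _
  conv_rhs => rw [hV.1.spectral_theorem, Unitary.conjStarAlgAut_apply]
  calc _ = hV.1.eigenvectorUnitary.1 * (diagonal ((↑) ∘ (√·) ∘ hV.1.eigenvalues) *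
        ((star hV.1.eigenvectorUnitary : Matrix (Fin p) (Fin p) ℝ) *
      hV.1.eigenvectorUnitary.1) * diagonal ((↑) ∘ (√·) ∘ hV.1.eigenvalues)) *
        (star hV.1.eigenvectorUnitary : Matrix (Fin p) (Fin p) ℝ) := by
        simp only [mul_assoc]
    _ = _ := by
        rw [hU, mul_one, diagonal_mul_diagonal]
        congr 3
        funext i
        simp [Real.mul_self_sqrt (hV.eigenvalues_nonneg i)]

lemma posSemidefSqrt_isHermitian {p : ℕ} {V : Matrix (Fin p) (Fin p) ℝ} (hV : V.PosSemidef) :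
    (posSemidefSqrt hV).IsHermitian := by
  unfold Matrix.IsHermitian posSemidefSqrt
  simp [Matrix.star_eq_conjTranspose, conjTranspose_mul, mul_assoc]

/-! ### One-dimensional facts about the standard normal CDF -/

lemma normalPDF_eq (x : ℝ) : normalPDF x = gaussianPDFReal 0 1 x := by
  simp only [normalPDF, gaussianPDFReal, NNReal.coe_one, mul_one, sub_zero]
  rw [div_eq_mul_inv, mul_comm]

lemma gaussianReal_Iic (x : ℝ) :
    gaussianReal 0 1 (Set.Iic x) = ENNReal.ofReal (stdNormalCDF x) := by
  rw [gaussianReal_apply_eq_integral 0 one_ne_zero, stdNormalCDF]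
  congr 1
  exact setIntegral_congr_fun measurableSet_Iic (fun t _ => (normalPDF_eq t).symm)

lemma stdNormalCDF_nonneg (x : ℝ) : 0 ≤ stdNormalCDF x :=
  setIntegral_nonneg measurableSet_Iic fun t _ => by
    rw [normalPDF_eq]; exact gaussianPDFReal_nonneg 0 1 t

lemma stdNormalCDF_le_one (x : ℝ) : stdNormalCDF x ≤ 1 := by
  have h := gaussianReal_Iic x
  have h2 : gaussianReal 0 1 (Set.Iic x) ≤ 1 := prob_le_one
  rw [h] at h2
  rw [← ENNReal.ofReal_one] at h2
  exact (ENNReal.ofReal_le_ofReal_iff (by norm_num)).mp h2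

lemma integrable_normalPDF : Integrable normalPDF := by
  have : normalPDF = gaussianPDFReal 0 1 := funext normalPDF_eq
  rw [this]; exact integrable_gaussianPDFReal 0 1

lemma stdNormalCDF_mono : Monotone stdNormalCDF := by
  intro a b hab
  refine setIntegral_mono_set integrable_normalPDF.integrableOn
    (Filter.Eventually.of_forall fun t => ?_)
    (HasSubset.Subset.eventuallyLE (Set.Iic_subset_Iic.mpr hab))
  rw [normalPDF_eq]; exact gaussianPDFReal_nonneg 0 1 t

instance : NullSingletonClass (gaussianReal 0 1) :=
  ⟨fun x => (gaussianReal_absolutelyContinuous 0 one_ne_zero) (measure_singleton x)⟩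

lemma gaussianReal_Ioi (x : ℝ) :
    gaussianReal 0 1 (Set.Ioi x) = ENNReal.ofReal (1 - stdNormalCDF x) := by
  have hc : Set.Ioi x = (Set.Iic x)ᶜ := Set.compl_Iic.symm
  rw [hc, measure_compl measurableSet_Iic (measure_ne_top _ _), gaussianReal_Iic,
    measure_univ, ← ENNReal.ofReal_one, ← ENNReal.ofReal_sub _ (stdNormalCDF_nonneg x)]

lemma stdNormalCDF_neg (x : ℝ) : stdNormalCDF (-x) = 1 - stdNormalCDF x := by
  have hmap := gaussianReal_map_const_mul (μ := 0) (v := 1) (-1)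
  have h1 : (NNReal.mk ((-1 : ℝ)^2) (sq_nonneg _) : ℝ≥0) * 1 = 1 := by
    ext; norm_num
  rw [h1, mul_zero] at hmap
  have hpre : ((-1 : ℝ) * ·) ⁻¹' (Set.Iic (-x)) = Set.Ici x := by
    ext y; simp [neg_le_neg_iff]
  have : gaussianReal 0 1 (Set.Iic (-x)) = gaussianReal 0 1 (Set.Ici x) := by
    conv_lhs => rw [← hmap]
    rw [Measure.map_apply (measurable_const_mul _) measurableSet_Iic, hpre]
  have hIci : gaussianReal 0 1 (Set.Ici x) = gaussianReal 0 1 (Set.Ioi x) :=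
    (measure_congr MeasureTheory.Ioi_ae_eq_Ici).symm
  have key : ENNReal.ofReal (stdNormalCDF (-x)) = ENNReal.ofReal (1 - stdNormalCDF x) := by
    rw [← gaussianReal_Iic, this, hIci, gaussianReal_Ioi]
  have h2 : (1 : ℝ) - stdNormalCDF x ≥ 0 := by linarith [stdNormalCDF_le_one x]
  exact (ENNReal.ofReal_eq_ofReal_iff (stdNormalCDF_nonneg _) h2).mp key

lemma gaussianReal_scaled_Ioi {v : ℝ≥0} (hv : 0 < (v : ℝ)) (t : ℝ) :
    gaussianReal 0 v (Set.Ioi t) = ENNReal.ofReal (1 - stdNormalCDF (t / Real.sqrt v)) := by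
  have hs : (0 : ℝ) < Real.sqrt v := Real.sqrt_pos.mpr hv
  have hmap := gaussianReal_map_const_mul (μ := 0) (v := 1) (Real.sqrt v)
  have h1 : (NNReal.mk ((Real.sqrt v : ℝ)^2) (sq_nonneg _) : ℝ≥0) * 1 = v := by
    ext; simp [Real.sq_sqrt hv.le]
  rw [h1, mul_zero] at hmap
  rw [← hmap, Measure.map_apply (measurable_const_mul _) measurableSet_Ioi]
  have hpre : (Real.sqrt v * ·) ⁻¹' (Set.Ioi t) = Set.Ioi (t / Real.sqrt v) := by
    ext y; simp only [Set.mem_preimage, Set.mem_Ioi]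
    rw [div_lt_iff₀ hs]; constructor <;> intro h <;> linarith [mul_comm (Real.sqrt v) y]
  rw [hpre, gaussianReal_Ioi]

/-! ### Product-measure lemmas -/

lemma lintegral_fin_pi_prod : ∀ {n : ℕ} (μ : Measure ℝ) [SigmaFinite μ]
    (f : Fin n → ℝ → ℝ≥0∞), (∀ i, Measurable (f i)) →
    ∫⁻ z : Fin n → ℝ, ∏ i, f i (z i) ∂(Measure.pi fun _ => μ) = ∏ i, ∫⁻ x, f i x ∂μ := by
  intro n
  induction n with
  | zero =>
      intro μ _ f hf
      simp only [Finset.univ_eq_empty, Finset.prod_empty, lintegral_one, Measure.pi_univ]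
  | succ n ih =>
      intro μ _ f hf
      have h := (measurePreserving_piFinSuccAbove (fun _ : Fin (n+1) => μ) 0).symm
      rw [← h.lintegral_comp_emb (MeasurableEquiv.measurableEmbedding _)]
      simp only [MeasurableEquiv.piFinSuccAbove_symm_apply, Fin.insertNthEquiv,
        Equiv.coe_fn_mk, Fin.insertNth_zero, Fin.prod_univ_succ, Fin.cons_zero, Fin.cons_succ,
        Fin.zero_succAbove, cast_eq]
      rw [lintegral_prod_mul (hf 0).aemeasurable
        (Measurable.aemeasurable (f := fun y : Fin n → ℝ => ∏ x : Fin n, f x.succ (y x))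
          (Finset.measurable_prod Finset.univ fun i _ =>
            (hf i.succ).comp (measurable_pi_apply i)))]
      rw [ih μ (fun i => f i.succ) (fun i => hf i.succ)]

lemma pi_withDensity_prod {n : ℕ} (μ : Measure ℝ) [SigmaFinite μ]
    (f : Fin n → ℝ → ℝ≥0∞) (hf : ∀ i, Measurable (f i))
    (hsf : ∀ i, SigmaFinite (μ.withDensity (f i))) :
    Measure.pi (fun i => μ.withDensity (f i))
      = (Measure.pi fun _ => μ).withDensity (fun z => ∏ i, f i (z i)) := by
  haveI := hsf
  refine Measure.pi_eq fun s hs => ?_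
  rw [withDensity_apply _ (MeasurableSet.univ_pi hs),
    ← lintegral_indicator (MeasurableSet.univ_pi hs)]
  have hind : ∀ z : Fin n → ℝ,
      (Set.pi Set.univ s).indicator (fun z => ∏ i, f i (z i)) z
        = ∏ i, (s i).indicator (f i) (z i) := by
    intro z
    by_cases hz : z ∈ Set.pi Set.univ s
    · rw [Set.indicator_of_mem hz]
      exact Finset.prod_congr rfl fun i _ =>
        (Set.indicator_of_mem (hz i (Set.mem_univ i)) _).symm
    · rw [Set.indicator_of_notMem hz]
      have : ∃ i, z i ∉ s i := by
        by_contra hcon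
        push_neg at hcon
        exact hz fun i _ => hcon i
      obtain ⟨i, hi⟩ := this
      exact (Finset.prod_eq_zero (Finset.mem_univ i)
        (Set.indicator_of_notMem hi _)).symm
  simp_rw [hind]
  rw [lintegral_fin_pi_prod μ _ (fun i => (hf i).indicator (hs i))]
  exact Finset.prod_congr rfl fun i _ => by
    rw [lintegral_indicator (hs i), withDensity_apply _ (hs i)]

lemma map_add_pi_gauss {n : ℕ} (w : Fin n → ℝ) :
    Measure.map (· + w) (Measure.pi fun _ : Fin n => gaussianReal 0 1)
      = Measure.pi (fun i => gaussianReal (w i) 1) := by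
  refine (Measure.pi_eq fun s hs => ?_).symm
  rw [Measure.map_apply (measurable_add_const w) (MeasurableSet.univ_pi hs)]
  have hpre : (· + w) ⁻¹' (Set.pi Set.univ s)
      = Set.pi Set.univ (fun i => (· + w i) ⁻¹' s i) := by
    ext z
    simp [Set.mem_pi]
  rw [hpre, Measure.pi_pi]
  refine Finset.prod_congr rfl fun i _ => ?_
  rw [← Measure.map_apply (measurable_add_const (w i)) (hs i), gaussianReal_map_add_const,
    zero_add]

lemma map_eval_pi {n : ℕ} (μ : Fin n → Measure ℝ) [∀ i, IsProbabilityMeasure (μ i)] (i : Fin n) :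
    Measure.map (fun z => z i) (Measure.pi μ) = μ i := by
  ext s hs
  rw [Measure.map_apply (measurable_pi_apply i) hs]
  have hpre : (fun z : Fin n → ℝ => z i) ⁻¹' s
      = Set.pi Set.univ (Function.update (fun _ => Set.univ) i s) := by
    ext z
    simp only [Set.mem_preimage, Set.mem_pi, Set.mem_univ, forall_true_left]
    constructor
    · intro h j
      by_cases hj : j = i
      · subst hj; rwa [Function.update_self]
      · rw [Function.update_of_ne hj]; trivial
    · intro h
      have := h i
      rwa [Function.update_self] at this
  rw [hpre, Measure.pi_pi]
  refine Finset.prod_eq_single i (fun j _ hj => ?_)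
    (fun h => absurd (Finset.mem_univ i) h) |>.trans ?_
  · rw [Function.update_of_ne hj]; exact measure_univ
  · rw [Function.update_self]

lemma gaussianReal_shift_density (m : ℝ) :
    gaussianReal m 1 = (gaussianReal 0 1).withDensity
      (fun x => ENNReal.ofReal (Real.exp (m * x - m ^ 2 / 2))) := by
  rw [gaussianReal_of_var_ne_zero m one_ne_zero, gaussianReal_of_var_ne_zero 0 one_ne_zero,
    ← withDensity_mul _ (measurable_gaussianPDF 0 1)
      (by exact ((measurable_id.const_mul m).sub measurable_const).exp.ennreal_ofReal)]
  congr 1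
  ext x
  simp only [Pi.mul_apply, gaussianPDF]
  rw [← ENNReal.ofReal_mul (gaussianPDFReal_nonneg 0 1 x)]
  congr 1
  simp only [gaussianPDFReal, NNReal.coe_one, mul_one, sub_zero]
  rw [mul_assoc, ← Real.exp_add]
  congr 1
  ring_nf

/-! ### Rotation invariance and the law of a linear functional -/

lemma prod_gaussianPDF {n : ℕ} (z : Fin n → ℝ) :
    ∏ i, gaussianPDF 0 1 (z i)
      = ENNReal.ofReal ((Real.sqrt (2 * π))⁻¹ ^ (n : ℕ)
          * Real.exp (-(∑ i, z i ^ 2) / 2)) := by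
  simp only [gaussianPDF_def]
  rw [← ENNReal.ofReal_prod_of_nonneg (fun i _ => gaussianPDFReal_nonneg 0 1 (z i))]
  congr 1
  simp only [gaussianPDFReal, NNReal.coe_one, mul_one, sub_zero]
  rw [Finset.prod_mul_distrib, Finset.prod_const, ← Real.exp_sum]
  congr 2
  · simp [Finset.card_univ]
  · rw [← Finset.sum_div, ← Finset.sum_neg_distrib]

lemma map_rot_pi_gauss {n : ℕ} (b : OrthonormalBasis (Fin n) ℝ (EuclideanSpace ℝ (Fin n))) :
    Measure.map (fun z : Fin n → ℝ =>
        ((MeasurableEquiv.toLp 2 (Fin n → ℝ)).symm)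
          (b.repr (((MeasurableEquiv.toLp 2 (Fin n → ℝ)).symm).symm z)))
      (Measure.pi fun _ : Fin n => gaussianReal 0 1)
      = (Measure.pi fun _ : Fin n => gaussianReal 0 1) := by
  classical
  set me := (MeasurableEquiv.toLp 2 (Fin n → ℝ)).symm
  set R : (Fin n → ℝ) ≃ᵐ (Fin n → ℝ) :=
    (me.symm.trans (b.repr.toHomeomorph.toMeasurableEquiv)).trans me with hR
  have hRfun : (fun z : Fin n → ℝ => me (b.repr (me.symm z))) = ⇑R := rfl
  rw [hRfun]
  have hsf : ∀ _i : Fin n, SigmaFinite (volume.withDensity (gaussianPDF 0 1)) := by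
    intro i
    rw [← gaussianReal_of_var_ne_zero 0 one_ne_zero]
    infer_instance
  have hπ : (Measure.pi fun _ : Fin n => gaussianReal 0 1)
      = (Measure.pi fun _ : Fin n => (volume : Measure ℝ)).withDensity
          (fun z => ∏ i, gaussianPDF 0 1 (z i)) := by
    rw [← pi_withDensity_prod volume _ (fun i => measurable_gaussianPDF 0 1) hsf]
    congr 1
    ext i : 1
    rw [gaussianReal_of_var_ne_zero 0 one_ne_zero]
  have hvol : MeasurePreserving R (Measure.pi fun _ : Fin n => (volume : Measure ℝ))
      (Measure.pi fun _ : Fin n => (volume : Measure ℝ)) := by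
    have h1 : MeasurePreserving me.symm
        (Measure.pi fun _ : Fin n => (volume : Measure ℝ))
        (volume : Measure (EuclideanSpace ℝ (Fin n))) := by
      have h3' : MeasurePreserving me (volume : Measure (EuclideanSpace ℝ (Fin n)))
          (Measure.pi fun _ : Fin n => (volume : Measure ℝ)) := by
        have := EuclideanSpace.volume_preserving_symm_measurableEquiv_toLp (Fin n)
        simpa [volume_pi] using this
      exact h3'.symm me
    have h2 : MeasurePreserving b.repr (volume : Measure (EuclideanSpace ℝ (Fin n)))
        (volume : Measure (EuclideanSpace ℝ (Fin n))) := b.measurePreserving_repr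
    have h3 : MeasurePreserving me (volume : Measure (EuclideanSpace ℝ (Fin n)))
        (Measure.pi fun _ : Fin n => (volume : Measure ℝ)) := by
      have := EuclideanSpace.volume_preserving_symm_measurableEquiv_toLp (Fin n)
      simpa [volume_pi] using this
    exact (h3.comp h2).comp h1
  have hGinv : ∀ y : Fin n → ℝ,
      (∏ i, gaussianPDF 0 1 ((R.symm y) i)) = ∏ i, gaussianPDF 0 1 (y i) := by
    intro y
    rw [prod_gaussianPDF, prod_gaussianPDF]
    have hnorm : ∑ i, (R.symm y) i ^ 2 = ∑ i, y i ^ 2 := by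
      have e1 : ∀ z : Fin n → ℝ, ∑ i, z i ^ 2 = ‖me.symm z‖ ^ 2 := by
        intro z
        rw [EuclideanSpace.norm_eq, Real.sq_sqrt (by positivity)]
        simp [Real.norm_eq_abs, sq_abs, me, MeasurableEquiv.symm_symm, MeasurableEquiv.toLp_apply]
      rw [e1, e1]
      have h4 : me.symm (R.symm y) = b.repr.symm (me.symm y) := rfl
      rw [h4, LinearIsometryEquiv.norm_map]
    rw [hnorm]
  rw [hπ]
  ext s hs
  rw [Measure.map_apply R.measurable hs,
    withDensity_apply _ (R.measurable hs), withDensity_apply _ hs]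
  have hstep : ∫⁻ y in s, (∏ i, gaussianPDF 0 1 (y i))
        ∂(Measure.pi fun _ : Fin n => (volume : Measure ℝ))
      = ∫⁻ y in s, (∏ i, gaussianPDF 0 1 ((R.symm y) i))
        ∂(Measure.map R (Measure.pi fun _ : Fin n => (volume : Measure ℝ))) := by
    rw [hvol.map_eq]
    exact setLIntegral_congr_fun hs (fun y _ => (hGinv y).symm)
  rw [hstep, setLIntegral_map hs
    (by exact Finset.measurable_prod Finset.univ fun i _ =>
      (measurable_gaussianPDF 0 1).comp ((measurable_pi_apply i).comp R.symm.measurable))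
    R.measurable]
  refine setLIntegral_congr_fun (R.measurable hs)
    (fun x _ => ?_)
  simp

lemma map_dotProduct_pi_gauss {n : ℕ} (w : Fin n → ℝ) (hw : w ≠ 0) :
    Measure.map (fun z => w ⬝ᵥ z) (Measure.pi fun _ : Fin n => gaussianReal 0 1)
      = gaussianReal 0 (NNReal.mk (∑ i, w i ^ 2) (by positivity)) := by
  classical
  have hn : 0 < n := by
    rcases Nat.eq_zero_or_pos n with h | h
    · subst h
      exact absurd (Subsingleton.elim w 0) hw
    · exact h
  set i₀ : Fin n := ⟨0, hn⟩
  set me := (MeasurableEquiv.toLp 2 (Fin n → ℝ)).symm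
  set wE : EuclideanSpace ℝ (Fin n) := (WithLp.equiv 2 (Fin n → ℝ)).symm w with hwE
  have hwE0 : wE ≠ 0 := by
    intro h
    apply hw
    have := congrArg (WithLp.equiv 2 (Fin n → ℝ)) h
    simpa [hwE] using this
  have hnormpos : 0 < ‖wE‖ := norm_pos_iff.mpr hwE0
  set u : EuclideanSpace ℝ (Fin n) := ‖wE‖⁻¹ • wE with hu
  have hun : ‖u‖ = 1 := by
    rw [hu, norm_smul, norm_inv, norm_norm, inv_mul_cancel₀ hnormpos.ne']
  have hortho : Orthonormal ℝ (Set.restrict {i₀} (fun _ : Fin n => u)) := by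
    constructor
    · intro i; exact hun
    · intro i j hij
      exact absurd (Subtype.ext (by
        have hi := i.2; have hj := j.2
        simp only [Set.mem_singleton_iff] at hi hj
        rw [hi, hj])) hij
  obtain ⟨b, hb⟩ := hortho.exists_orthonormalBasis_extension_of_card_eq
    (by simp [finrank_euclideanSpace])
  have hbu : b i₀ = u := hb i₀ rfl
  have hkey : ∀ z : Fin n → ℝ,
      w ⬝ᵥ z = ‖wE‖ * ((me (b.repr (me.symm z))) i₀) := by
    intro z
    have h1 : (me (b.repr (me.symm z))) i₀ = b.repr (me.symm z) i₀ := rfl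
    rw [h1, b.repr_apply_apply, hbu, hu]
    rw [real_inner_smul_left]
    have h2 : (inner ℝ wE (me.symm z) : ℝ) = w ⬝ᵥ z := by
      rw [PiLp.inner_apply]
      simp only [RCLike.inner_apply, conj_trivial]
      exact Finset.sum_congr rfl fun i _ => mul_comm _ _
    rw [h2]
    field_simp
  have hRmeas : Measurable (fun z : Fin n → ℝ => me (b.repr (me.symm z))) :=
    me.measurable.comp (b.repr.toHomeomorph.toMeasurableEquiv.measurable.comp me.symm.measurable)
  have hmapfun : (fun z : Fin n → ℝ => w ⬝ᵥ z)
      = (fun x : ℝ => ‖wE‖ * x) ∘ (fun y : Fin n → ℝ => y i₀)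
        ∘ (fun z : Fin n → ℝ => me (b.repr (me.symm z))) := by
    funext z; exact hkey z
  rw [hmapfun]
  rw [show (fun x : ℝ => ‖wE‖ * x) ∘ (fun y : Fin n → ℝ => y i₀)
        ∘ (fun z : Fin n → ℝ => me (b.repr (me.symm z)))
      = ((fun x : ℝ => ‖wE‖ * x) ∘ (fun y : Fin n → ℝ => y i₀))
        ∘ (fun z : Fin n → ℝ => me (b.repr (me.symm z))) from rfl]
  rw [← Measure.map_map ((measurable_const_mul _).comp (measurable_pi_apply i₀)) hRmeas]
  rw [map_rot_pi_gauss b]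
  have hmm := Measure.map_map (μ := Measure.pi fun _ : Fin n => gaussianReal 0 1)
    (measurable_const_mul ‖wE‖)
    (measurable_pi_apply i₀ : Measurable fun f : Fin n → ℝ => f i₀)
  rw [← hmm]
  rw [map_eval_pi (fun _ => gaussianReal 0 1) i₀]
  rw [gaussianReal_map_const_mul]
  congr 1
  · simp
  · have hns : ‖wE‖ ^ 2 = ∑ i, w i ^ 2 := by
      rw [← real_inner_self_eq_norm_sq, PiLp.inner_apply]
      simp only [RCLike.inner_apply, conj_trivial]
      refine Finset.sum_congr rfl fun i _ => ?_
      rw [sq]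
      rfl
    ext
    simp [hns]

lemma measurable_mulVec {n : ℕ} (M : Matrix (Fin n) (Fin n) ℝ) :
    Measurable (fun z : Fin n → ℝ => M.mulVec z) := by
  refine measurable_pi_lambda _ fun i => ?_
  simp only [Matrix.mulVec, dotProduct]
  exact Finset.measurable_sum Finset.univ fun j _ =>
    (measurable_pi_apply j).const_mul (M := ℝ) (M i j)

lemma measurable_dotProduct {n : ℕ} (w : Fin n → ℝ) :
    Measurable (fun z : Fin n → ℝ => w ⬝ᵥ z) := by
  simp only [dotProduct]
  exact Finset.measurable_sum Finset.univ fun j _ =>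
    (measurable_pi_apply j).const_mul (M := ℝ) (w j)

/-- Theorem 5: along the local direction `c = −δ·V·θ`, the asymptotic local power
`Φ(z_α − τ/√κ)` of the smoothed-indicator test is at least `α` and is not smaller than
the local power `N(0,V)({z : S(z + c) > q})` of any level-`α` test based on `S`. -/
theorem Q_locally_most_powerful
    {p : ℕ} (V : Matrix (Fin p) (Fin p) ℝ) (hV : V.PosDef)
    (θ : Fin p → ℝ) (hθpos : ∀ j, 0 < θ j) (δ : ℝ) (hδ : 0 < δ)
    (c : Fin p → ℝ) (hc : c = -(δ • V.mulVec θ))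
    (τ : ℝ) (hτ : τ = θ ⬝ᵥ c) (κ : ℝ) (hκ : κ = θ ⬝ᵥ V.mulVec θ)
    (α : ℝ) (hα0 : 0 < α) (hα1 : α < 1)
    (S : (Fin p → ℝ) → ℝ) (hS : Measurable S)
    (q : ℝ) (hq : gaussianPi 0 hV.posSemidef {z | q < S z} = ENNReal.ofReal α)
    (zα : ℝ) (hzα : stdNormalCDF zα = α) :
    α ≤ stdNormalCDF (zα - τ / Real.sqrt κ) ∧
      gaussianPi 0 hV.posSemidef {z | q < S (z + c)} ≤
        ENNReal.ofReal (stdNormalCDF (zα - τ / Real.sqrt κ)) := by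
  classical
  have hsqrt : posSemidefSqrt hV.posSemidef * posSemidefSqrt hV.posSemidef = V := posSemidefSqrt_mul_self hV.posSemidef
  set Vs : Matrix (Fin p) (Fin p) ℝ := posSemidefSqrt hV.posSemidef with hVsdef
  set Pm : Measure (Fin p → ℝ) := Measure.pi fun _ : Fin p => gaussianReal 0 1 with hPmdef
  rcases Nat.eq_zero_or_pos p with hp | hp
  · -- degenerate case p = 0
    subst hp
    have hτ0 : τ = 0 := by simp [hτ, dotProduct]
    have hκ0 : κ = 0 := by simp [hκ, dotProduct]
    have hset : {z : Fin 0 → ℝ | q < S (z + c)} = {z : Fin 0 → ℝ | q < S z} := by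
      ext z; rw [Set.mem_setOf_eq, Set.mem_setOf_eq, Subsingleton.elim (z + c) z]
    rw [hτ0, hκ0, Real.sqrt_zero, zero_div, sub_zero, hzα]
    exact ⟨le_refl α, by rw [hset, hq]⟩
  -- main case p > 0
  have hθne : θ ≠ 0 := fun h => (hθpos ⟨0, hp⟩).ne' (congrFun h ⟨0, hp⟩)
  have hκpos : 0 < κ := by
    have h := hV.dotProduct_mulVec_pos hθne
    rw [hκ]
    simpa using h
  have hsκ : Real.sqrt κ ≠ 0 := (Real.sqrt_pos.mpr hκpos).ne'
  have hVsym : Vsᵀ = Vs := by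
    have := posSemidefSqrt_isHermitian hV.posSemidef
    rwa [Matrix.IsHermitian, Matrix.conjTranspose_eq_transpose_of_trivial] at this
  set w : Fin p → ℝ := -(δ • Vs.mulVec θ) with hwdef
  have hVsw : Vs.mulVec w = c := by
    rw [hwdef, hc, Matrix.mulVec_neg, Matrix.mulVec_smul, Matrix.mulVec_mulVec, hsqrt]
  have hVsθ : (Vs.mulVec θ) ⬝ᵥ (Vs.mulVec θ) = κ := by
    rw [dotProduct_mulVec, ← Matrix.mulVec_transpose, hVsym,
      Matrix.mulVec_mulVec, hsqrt, dotProduct_comm, hκ]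
  set vv : ℝ := ∑ i, w i ^ 2 with hvvdef
  have hvv : vv = δ ^ 2 * κ := by
    have h1 : vv = w ⬝ᵥ w := by
      simp [hvvdef, dotProduct, sq]
    rw [h1, hwdef, neg_dotProduct, dotProduct_neg, neg_neg,
      smul_dotProduct, dotProduct_smul, smul_eq_mul, smul_eq_mul, hVsθ]
    ring
  have hvvpos : 0 < vv := by rw [hvv]; positivity
  have hw0 : w ≠ 0 := by
    intro h
    rw [hvvdef, h] at hvvpos
    simp at hvvpos
  have hsvv : Real.sqrt vv = δ * Real.sqrt κ := by
    rw [hvv, Real.sqrt_mul (sq_nonneg δ), Real.sqrt_sq hδ.le]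
  have hτκ : τ = -(δ * κ) := by
    rw [hτ, hc, dotProduct_neg, dotProduct_smul, smul_eq_mul, hκ]
  have harg : zα - τ / Real.sqrt κ = zα + Real.sqrt vv := by
    rw [hτκ, hsvv, neg_div, sub_neg_eq_add, mul_div_assoc, Real.div_sqrt]
  -- goal 1
  have hgoal1 : α ≤ stdNormalCDF (zα - τ / Real.sqrt κ) := by
    rw [harg, ← hzα]
    exact stdNormalCDF_mono (le_add_of_nonneg_right (Real.sqrt_nonneg _))
  refine ⟨hgoal1, ?_⟩
  -- measure setup
  have hmap0 : Measurable fun z : Fin p → ℝ => (0 : Fin p → ℝ) + Vs.mulVec z :=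
    (measurable_mulVec Vs).const_add 0
  have hgp : ∀ s : Set (Fin p → ℝ), MeasurableSet s →
      gaussianPi 0 hV.posSemidef s = Pm ((fun z => Vs.mulVec z) ⁻¹' s) := by
    intro s hs
    rw [gaussianPi, Measure.map_apply hmap0 hs]
    congr 1
    ext z
    simp [hVsdef]
  set B : Set (Fin p → ℝ) := {z | q < S (Vs.mulVec z)} with hBdef
  have hBmeas : MeasurableSet B :=
    measurableSet_lt measurable_const (hS.comp (measurable_mulVec Vs))
  have hPmB : Pm B = ENNReal.ofReal α := by
    rw [← hq, hgp _ (measurableSet_lt measurable_const hS)]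
    rfl
  set t : ℝ := -zα * Real.sqrt vv with htdef
  set H : Set (Fin p → ℝ) := {z | t < w ⬝ᵥ z} with hHdef
  have hHmeas : MeasurableSet H :=
    measurableSet_lt measurable_const (measurable_dotProduct w)
  have hmapT := map_dotProduct_pi_gauss w hw0
  have hPmIoi : ∀ r : ℝ, Pm {z | r < w ⬝ᵥ z}
      = ENNReal.ofReal (1 - stdNormalCDF (r / Real.sqrt vv)) := by
    intro r
    have hpre : {z : Fin p → ℝ | r < w ⬝ᵥ z} = (fun z => w ⬝ᵥ z) ⁻¹' Set.Ioi r := rfl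
    rw [hpre, ← Measure.map_apply (measurable_dotProduct w) measurableSet_Ioi, hmapT,
      gaussianReal_scaled_Ioi (by exact_mod_cast hvvpos) r]
    rfl
  have hPmH : Pm H = ENNReal.ofReal α := by
    rw [hHdef, hPmIoi, htdef, mul_div_assoc, div_self (Real.sqrt_pos.mpr hvvpos).ne',
      mul_one, stdNormalCDF_neg, hzα]
    norm_num
  -- the likelihood ratio
  set L : (Fin p → ℝ) → ℝ≥0∞ :=
    fun z => ENNReal.ofReal (Real.exp (w ⬝ᵥ z - vv / 2)) with hLdef
  have hLmeas : Measurable L :=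
    (((measurable_dotProduct w).sub measurable_const).exp).ennreal_ofReal
  have hdens : Measure.map (· + w) Pm = Pm.withDensity L := by
    rw [hPmdef, map_add_pi_gauss w]
    have hfm : ∀ i : Fin p, Measurable
        (fun x : ℝ => ENNReal.ofReal (Real.exp (w i * x - (w i) ^ 2 / 2))) := fun i =>
      (((measurable_id.const_mul (w i)).sub measurable_const).exp).ennreal_ofReal
    have hsf : ∀ i : Fin p, SigmaFinite ((gaussianReal 0 1).withDensity
        (fun x : ℝ => ENNReal.ofReal (Real.exp (w i * x - (w i) ^ 2 / 2)))) := by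
      intro i
      rw [← gaussianReal_shift_density (w i)]
      infer_instance
    have hpi : (fun i : Fin p => gaussianReal (w i) 1)
        = fun i : Fin p => (gaussianReal 0 1).withDensity
            (fun x : ℝ => ENNReal.ofReal (Real.exp (w i * x - (w i) ^ 2 / 2))) := by
      funext i
      exact gaussianReal_shift_density (w i)
    rw [hpi, pi_withDensity_prod _ _ hfm hsf]
    congr 1
    funext z
    rw [hLdef, ← ENNReal.ofReal_prod_of_nonneg (fun i _ => (Real.exp_pos _).le)]
    congr 1
    rw [← Real.exp_sum]
    congr 1
    rw [Finset.sum_sub_distrib, ← Finset.sum_div]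
    rfl
  -- Neyman–Pearson comparison
  set ℓ : ℝ≥0∞ := ENNReal.ofReal (Real.exp (t - vv / 2)) with hℓdef
  have hdiffeq : Pm (B \ H) = Pm (H \ B) := by
    have h1 := measure_inter_add_diff (μ := Pm) B hHmeas
    have h2 := measure_inter_add_diff (μ := Pm) H hBmeas
    rw [hPmB] at h1
    rw [hPmH, Set.inter_comm H B] at h2
    have h3 : Pm (B ∩ H) + Pm (B \ H) = Pm (B ∩ H) + Pm (H \ B) := h1.trans h2.symm
    exact (ENNReal.add_right_inj (measure_ne_top Pm _)).mp h3
  have hub : ∫⁻ z in B \ H, L z ∂Pm ≤ ℓ * Pm (B \ H) := by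
    have := setLIntegral_mono' (μ := Pm) (hBmeas.diff hHmeas)
      (f := L) (g := fun _ => ℓ) (fun z hz => by
        rw [hLdef, hℓdef]
        refine ENNReal.ofReal_le_ofReal (Real.exp_le_exp.mpr ?_)
        have hzH : ¬ t < w ⬝ᵥ z := hz.2
        push_neg at hzH
        linarith)
    simpa [setLIntegral_const] using this
  have hlb : ℓ * Pm (H \ B) ≤ ∫⁻ z in H \ B, L z ∂Pm := by
    have := setLIntegral_mono' (μ := Pm) (hHmeas.diff hBmeas)
      (f := fun _ => ℓ) (g := L) (fun z hz => by
        rw [hLdef, hℓdef]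
        refine ENNReal.ofReal_le_ofReal (Real.exp_le_exp.mpr ?_)
        have hzH : t < w ⬝ᵥ z := hz.1
        linarith)
    simpa [setLIntegral_const] using this
  have hBH : ∫⁻ z in B, L z ∂Pm ≤ ∫⁻ z in H, L z ∂Pm := by
    have hsplitB : ∫⁻ z in B, L z ∂Pm
        = ∫⁻ z in B ∩ H, L z ∂Pm + ∫⁻ z in B \ H, L z ∂Pm := by
      conv_lhs => rw [← Set.inter_union_diff B H]
      rw [lintegral_union (hBmeas.diff hHmeas) Set.disjoint_sdiff_inter.symm]
    have hsplitH : ∫⁻ z in H, L z ∂Pm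
        = ∫⁻ z in B ∩ H, L z ∂Pm + ∫⁻ z in H \ B, L z ∂Pm := by
      conv_lhs => rw [← Set.inter_union_diff H B]
      rw [lintegral_union (hHmeas.diff hBmeas) Set.disjoint_sdiff_inter.symm,
        Set.inter_comm H B]
    rw [hsplitB, hsplitH]
    refine add_le_add le_rfl ?_
    calc ∫⁻ z in B \ H, L z ∂Pm ≤ ℓ * Pm (B \ H) := hub
      _ = ℓ * Pm (H \ B) := by rw [hdiffeq]
      _ ≤ ∫⁻ z in H \ B, L z ∂Pm := hlb
  -- final computation
  have hwdot : w ⬝ᵥ w = vv := by simp [hvvdef, dotProduct, sq]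
  have hpreH : (· + w) ⁻¹' H = {z : Fin p → ℝ | t - vv < w ⬝ᵥ z} := by
    ext z
    simp only [Set.mem_preimage, hHdef, Set.mem_setOf_eq, dotProduct_add, hwdot]
    constructor <;> intro h <;> linarith
  calc gaussianPi 0 hV.posSemidef {z | q < S (z + c)}
      = Pm ((· + w) ⁻¹' B) := by
        rw [hgp _ (measurableSet_lt measurable_const
          (show Measurable fun z : Fin p → ℝ => S (z + c) from
            hS.comp (measurable_add_const c)))]
        congr 1
        ext z
        simp only [Set.mem_preimage, hBdef, Set.mem_setOf_eq, Matrix.mulVec_add, hVsw]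
    _ = (Measure.map (· + w) Pm) B := (Measure.map_apply (measurable_add_const w) hBmeas).symm
    _ = ∫⁻ z in B, L z ∂Pm := by rw [hdens, withDensity_apply _ hBmeas]
    _ ≤ ∫⁻ z in H, L z ∂Pm := hBH
    _ = (Measure.map (· + w) Pm) H := by rw [hdens, withDensity_apply _ hHmeas]
    _ = Pm ((· + w) ⁻¹' H) := Measure.map_apply (measurable_add_const w) hHmeas
    _ = ENNReal.ofReal (1 - stdNormalCDF ((t - vv) / Real.sqrt vv)) := by
        rw [hpreH, hPmIoi]
    _ = ENNReal.ofReal (stdNormalCDF (zα - τ / Real.sqrt κ)) := by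
        congr 1
        have h1 : (t - vv) / Real.sqrt vv = -(zα + Real.sqrt vv) := by
          rw [htdef, sub_div, mul_div_assoc, div_self (Real.sqrt_pos.mpr hvvpos).ne',
            mul_one, Real.div_sqrt]
          ring
        rw [h1, stdNormalCDF_neg, harg]
        ring


end
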